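/- Let H be an inner product space, y_1,…,y_n ∈ H, and M ≥ m > 0 such that Re⟨M y_j − y_i, y_i − m y_j⟩ ≥ 0 for all 1 ≤ i < j ≤ n. Then (∑_{i=1}^n ‖y_i‖)² ≤ ‖∑_{i=1}^n y_i‖² + (1/2)·((M−m)²/(M+m)) · ∑_{k=1}^{n−1} k·‖y_{k+1}‖². -/

import Mathlib

lemma pair_ineq' {𝕜 H : Type*} [RCLike 𝕜] [NormedAddCommGroup H] [InnerProductSpace 𝕜 H]
    (a b : H) (M m : ℝ) (hm : 0 < m) (hMm : m ≤ M)
    (hab : 0 ≤ RCLike.re (inner 𝕜 ((M:𝕜) • b - a) (a - (m:𝕜) • b) : 𝕜)) :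
    ‖a‖ * ‖b‖ - RCLike.re (inner 𝕜 a b : 𝕜) ≤ (M - m)^2 / (4*(M+m)) * ‖b‖^2 := by
  have key : ‖a‖^2 + m*M*‖b‖^2 ≤ (M+m) * RCLike.re (inner 𝕜 a b : 𝕜) := by
    have e : RCLike.re (inner 𝕜 ((M:𝕜) • b - a) (a - (m:𝕜) • b) : 𝕜)
        = (M+m) * RCLike.re (inner 𝕜 a b : 𝕜) - ‖a‖^2 - m*M*‖b‖^2 := by
      simp [inner_sub_left, inner_sub_right, inner_smul_left, inner_smul_right,
        RCLike.conj_ofReal, inner_self_eq_norm_sq (𝕜 := 𝕜), inner_re_symm (𝕜 := 𝕜) b a]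
      ring
    linarith [hab, e ▸ hab]
  have hb : 0 ≤ ‖b‖ := norm_nonneg b
  have ha : 0 ≤ ‖a‖ := norm_nonneg a
  rw [div_mul_eq_mul_div, le_div_iff₀ (by linarith : (0:ℝ) < 4*(M+m))]
  nlinarith [sq_nonneg (‖a‖ - (M+m)/2 * ‖b‖), key]

theorem stmt_15 {𝕜 H : Type*} [RCLike 𝕜] [NormedAddCommGroup H] [InnerProductSpace 𝕜 H]
    (n : ℕ) (y : ℕ → H) (M m : ℝ) (hm : 0 < m) (hMm : m ≤ M)
    (h : ∀ i ∈ Finset.Icc 1 n, ∀ j ∈ Finset.Icc 1 n, i < j →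
      0 ≤ RCLike.re (inner 𝕜 ((M : 𝕜) • y j - y i) (y i - (m : 𝕜) • y j) : 𝕜)) :
    (∑ i ∈ Finset.Icc 1 n, ‖y i‖) ^ 2 ≤ ‖∑ i ∈ Finset.Icc 1 n, y i‖ ^ 2 +
      (1 / 2) * ((M - m) ^ 2 / (M + m)) *
        ∑ k ∈ Finset.Icc 1 (n - 1), (k : ℝ) * ‖y (k + 1)‖ ^ 2 := by
  induction n with
  | zero => simp
  | succ n ih =>
    have hsub : ∀ i ∈ Finset.Icc 1 n, i ∈ Finset.Icc 1 (n+1) := by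
      intro i hi
      simp only [Finset.mem_Icc] at hi ⊢; omega
    have ih' := ih (fun i hi j hj hij => h i (hsub i hi) j (hsub j hj) hij)
    have hnotmem : n + 1 ∉ Finset.Icc 1 n := by simp
    have hins : Finset.Icc 1 (n+1) = insert (n+1) (Finset.Icc 1 n) := by
      ext k; simp only [Finset.mem_Icc, Finset.mem_insert]; omega
    set c := (M - m)^2 / (4*(M+m)) with hcdef
    have hksum : ∑ k ∈ Finset.Icc 1 n, (k : ℝ) * ‖y (k + 1)‖ ^ 2
        = (∑ k ∈ Finset.Icc 1 (n-1), (k : ℝ) * ‖y (k + 1)‖ ^ 2) + n * ‖y (n+1)‖^2 := by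
      cases n with
      | zero => simp
      | succ p =>
        have hq : Finset.Icc 1 (p+1) = insert (p+1) (Finset.Icc 1 p) := by
          ext k; simp only [Finset.mem_Icc, Finset.mem_insert]; omega
        rw [hq, Finset.sum_insert (by simp)]
        simp
        ring
    rw [hins, Finset.sum_insert hnotmem, Finset.sum_insert hnotmem,
      Nat.add_sub_cancel, hksum]
    have hnorm : ‖y (n+1) + (∑ i ∈ Finset.Icc 1 n, y i)‖^2
        = ‖∑ i ∈ Finset.Icc 1 n, y i‖^2
          + 2 * RCLike.re (inner 𝕜 (∑ i ∈ Finset.Icc 1 n, y i) (y (n+1)) : 𝕜)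
          + ‖y (n+1)‖^2 := by
      rw [add_comm]
      exact norm_add_sq (𝕜 := 𝕜) _ _
    have hre : RCLike.re (inner 𝕜 (∑ i ∈ Finset.Icc 1 n, y i) (y (n+1)) : 𝕜)
        = ∑ i ∈ Finset.Icc 1 n, RCLike.re (inner 𝕜 (y i) (y (n+1)) : 𝕜) := by
      rw [sum_inner, map_sum]
    have hsum : ∑ i ∈ Finset.Icc 1 n, (‖y i‖ * ‖y (n+1)‖ - RCLike.re (inner 𝕜 (y i) (y (n+1)) : 𝕜))
        ≤ ∑ i ∈ Finset.Icc 1 n, c * ‖y (n+1)‖^2 := by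
      apply Finset.sum_le_sum
      intro i hi
      exact pair_ineq' (y i) (y (n+1)) M m hm hMm
        (h i (hsub i hi) (n+1) (by simp) (by simp only [Finset.mem_Icc] at hi; omega))
    have hcard : ∑ i ∈ Finset.Icc 1 n, c * ‖y (n+1)‖^2 = (n : ℝ) * (c * ‖y (n+1)‖^2) := by
      rw [Finset.sum_const, Nat.card_Icc]
      simp
    rw [Finset.sum_sub_distrib, ← Finset.sum_mul, hcard] at hsum
    have hMm0 : M + m ≠ 0 := by linarith
    have hC : (1 / 2) * ((M - m) ^ 2 / (M + m)) = 2 * c := by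
      rw [hcdef]; field_simp; ring
    have hexp : (‖y (n+1)‖ + ∑ i ∈ Finset.Icc 1 n, ‖y i‖)^2
        = ‖y (n+1)‖^2 + 2 * (∑ i ∈ Finset.Icc 1 n, ‖y i‖) * ‖y (n+1)‖
          + (∑ i ∈ Finset.Icc 1 n, ‖y i‖)^2 := by ring
    rw [hC] at ih' ⊢
    linarith [hsum, ih', hnorm, hre, hexp]
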